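/- arXiv:1410.3745 — 2 statements merged into one kernel-verified Lean document; each statement's English description precedes it below -/
import Mathlib

section
/- For all 0 ≤ x ≤ 1, x - (x² + x³)/2 ≤ h(1-x) ≤ x - x²/2, where h(t) = -t·log t with h(0)=0. -/
noncomputable def h (t : ℝ) : ℝ := -t * Real.log t

lemma F_hasDeriv {s : ℝ} (hs0 : s ≠ 0) :
    HasDerivAt (fun s : ℝ => (1 - s ^ 2) / 2 + s * Real.log s) (-s + (Real.log s + 1)) s := by
  have ha : HasDerivAt (fun s : ℝ => (1 - s ^ 2) / 2) (-s) s := by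
    have h2 : HasDerivAt (fun s : ℝ => (1 - s ^ 2) / 2) ((0 - 2 * s ^ 1) / 2) s :=
      ((hasDerivAt_const s (1 : ℝ)).sub (hasDerivAt_pow 2 s)).div_const 2
    convert h2 using 1
    ring
  exact ha.add (Real.hasDerivAt_mul_log hs0)

lemma upper_aux {t : ℝ} (ht : 0 < t) (ht1 : t ≤ 1) :
    -t * Real.log t ≤ (1 - t ^ 2) / 2 := by
  set F : ℝ → ℝ := fun s => (1 - s ^ 2) / 2 + s * Real.log s with hF
  have hcont : ContinuousOn F (Set.Icc t 1) := by
    apply ContinuousOn.add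
    · fun_prop
    · apply ContinuousOn.mul continuousOn_id
      apply Real.continuousOn_log.mono
      intro s hs
      simp only [Set.mem_compl_iff, Set.mem_singleton_iff]
      have := hs.1
      intro h0; rw [h0] at this; linarith
  have hderiv : ∀ s ∈ interior (Set.Icc t 1), deriv F s ≤ 0 := by
    intro s hs
    rw [interior_Icc] at hs
    have hs0 : s ≠ 0 := by have := hs.1; intro h0; rw [h0] at this; linarith
    rw [(F_hasDeriv hs0).deriv]
    have hlog : Real.log s ≤ s - 1 := Real.log_le_sub_one_of_pos (by linarith [hs.1])
    linarith
  have hdiff : ∀ s ∈ interior (Set.Icc t 1), DifferentiableAt ℝ F s := by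
    intro s hs
    rw [interior_Icc] at hs
    have hs0 : s ≠ 0 := by have := hs.1; intro h0; rw [h0] at this; linarith
    exact (F_hasDeriv hs0).differentiableAt
  have hanti : AntitoneOn F (Set.Icc t 1) :=
    antitoneOn_of_deriv_nonpos (convex_Icc t 1) hcont
      (fun s hs => (hdiff s hs).differentiableWithinAt) hderiv
  have h1 : F 1 ≤ F t := hanti (Set.left_mem_Icc.mpr ht1) (Set.right_mem_Icc.mpr ht1) ht1
  have hF1 : F 1 = 0 := by simp [hF]
  have h2 : (0:ℝ) ≤ (1 - t ^ 2) / 2 + t * Real.log t := by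
    simpa [hF] using h1
  nlinarith [h2]

lemma G_hasDeriv {s : ℝ} (hs0 : 0 < s) :
    HasDerivAt (fun s : ℝ => Real.log s - 2 * (s - 1) / (s + 1))
      (1 / s - (2 * (s + 1) - 2 * (s - 1) * 1) / (s + 1) ^ 2) s := by
  have hne : s + 1 ≠ 0 := by linarith
  have ha : HasDerivAt (fun s : ℝ => 2 * (s - 1) / (s + 1))
      ((2 * (s + 1) - 2 * (s - 1) * 1) / (s + 1) ^ 2) s := by
    apply HasDerivAt.div
    · simpa using ((hasDerivAt_id s).sub_const 1).const_mul 2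
    · simpa using (hasDerivAt_id s).add_const 1
    · exact hne
  have hl : HasDerivAt Real.log (1 / s) s := by
    simpa [one_div] using Real.hasDerivAt_log (ne_of_gt hs0)
  exact hl.sub ha

lemma log_lower {u : ℝ} (hu : 1 ≤ u) : 2 * (u - 1) / (u + 1) ≤ Real.log u := by
  set G : ℝ → ℝ := fun s => Real.log s - 2 * (s - 1) / (s + 1) with hG
  have hcont : ContinuousOn G (Set.Icc 1 u) := by
    apply ContinuousOn.sub
    · apply Real.continuousOn_log.mono
      intro s hs
      simp only [Set.mem_compl_iff, Set.mem_singleton_iff]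
      have := hs.1; intro h0; rw [h0] at this; linarith
    · apply ContinuousOn.div (by fun_prop) (by fun_prop)
      intro s hs
      have := hs.1; intro h0; linarith
  have hderiv : ∀ s ∈ interior (Set.Icc (1:ℝ) u), 0 ≤ deriv G s := by
    intro s hs
    rw [interior_Icc] at hs
    have hs0 : (0:ℝ) < s := by linarith [hs.1]
    rw [(G_hasDeriv hs0).deriv]
    have key : (2 * (s + 1) - 2 * (s - 1) * 1) / (s + 1) ^ 2 ≤ 1 / s := by
      rw [div_le_div_iff₀ (by positivity) hs0]
      nlinarith [sq_nonneg (s - 1)]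
    linarith
  have hdiff : ∀ s ∈ interior (Set.Icc (1:ℝ) u), DifferentiableAt ℝ G s := by
    intro s hs
    rw [interior_Icc] at hs
    exact (G_hasDeriv (by linarith [hs.1])).differentiableAt
  have hmono : MonotoneOn G (Set.Icc 1 u) :=
    monotoneOn_of_deriv_nonneg (convex_Icc 1 u) hcont
      (fun s hs => (hdiff s hs).differentiableWithinAt) hderiv
  have h1 : G 1 ≤ G u := hmono (Set.left_mem_Icc.mpr hu) (Set.right_mem_Icc.mpr hu) hu
  have hG1 : G 1 = 0 := by simp [hG]
  have h2 : (0:ℝ) ≤ Real.log u - 2 * (u - 1) / (u + 1) := by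
    simpa [hG] using h1
  linarith

lemma lower_aux {t : ℝ} (ht : 0 < t) (ht1 : t ≤ 1) :
    2 * t * (1 - t) / (1 + t) ≤ -t * Real.log t := by
  have hu : 1 ≤ 1 / t := by rw [le_div_iff₀ ht]; linarith
  have hlog := log_lower hu
  rw [Real.log_div one_ne_zero (ne_of_gt ht), Real.log_one] at hlog
  have hstep : 2 * (1 / t - 1) / (1 / t + 1) = 2 * (1 - t) / (1 + t) := by
    rw [div_eq_div_iff (by positivity) (by positivity)]
    field_simp
  rw [hstep] at hlog
  have := mul_le_mul_of_nonneg_left hlog ht.le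
  calc 2 * t * (1 - t) / (1 + t) = t * (2 * (1 - t) / (1 + t)) := by ring
    _ ≤ t * (0 - Real.log t) := this
    _ = -t * Real.log t := by ring

theorem h_one_sub_bounds (x : ℝ) (hx0 : 0 ≤ x) (hx1 : x ≤ 1) :
    x - (x ^ 2 + x ^ 3) / 2 ≤ h (1 - x) ∧ h (1 - x) ≤ x - x ^ 2 / 2 := by
  rcases eq_or_lt_of_le hx1 with h1 | h1
  · subst h1
    simp [h, Real.log_zero]
    norm_num
  · set t := 1 - x with htdef
    have ht : 0 < t := by simp only [htdef]; linarith
    have ht1 : t ≤ 1 := by simp only [htdef]; linarith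
    constructor
    · have hlow := lower_aux ht ht1
      have key : x - (x ^ 2 + x ^ 3) / 2 ≤ 2 * t * (1 - t) / (1 + t) := by
        rw [le_div_iff₀ (by simp only [htdef]; linarith : (0:ℝ) < 1 + t)]
        simp only [htdef]
        nlinarith [mul_nonneg (mul_nonneg hx0 (by linarith : (0:ℝ) ≤ 1 - x)) (sq_nonneg x)]
      simp only [h]
      linarith
    · have := upper_aux ht ht1
      have heq : (1 - t ^ 2) / 2 = x - x ^ 2 / 2 := by simp only [htdef]; ring
      simp only [h]
      linarith
end

section
/- With h(t) = -t·log t, α ∈ (0,1/2), ρ ≥ 0, ρα ≤ 1, 2α - ρα² ≤ 1: for every d ≥ 1, (d/2)[h(ρα²) + 2h(α-ρα²) + h(1-2α+ρα²)] - (d-1)[h(α)+h(1-α)] ≤ -(d/2)·Ψ(ρ)·α² + α + h(α) + ((2ρ+1)d/2)·α³, where Ψ(ρ) = 1 - ρ + ρ·log ρ. -/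
noncomputable def Psi (x : ℝ) : ℝ := 1 - x + x * Real.log x

lemma h_mul (a b : ℝ) : h (a * b) = b * h a + a * h b := by
  rcases eq_or_ne a 0 with rfl | ha
  · simp [h]
  rcases eq_or_ne b 0 with rfl | hb
  · simp [h]
  simp only [h, Real.log_mul ha hb]; ring

/-- sinh-type inequality: `h (1 - x) ≤ x - x^2/2` on `[0,1]`. -/
lemma hB1 {x : ℝ} (hx0 : 0 ≤ x) (hx1 : x ≤ 1) : h (1 - x) ≤ x - x ^ 2 / 2 := by
  rcases eq_or_lt_of_le hx1 with rfl | hx1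
  · norm_num [h]
  set t : ℝ := 1 - x with ht
  have ht0 : 0 < t := by simp only [ht]; linarith
  have htle : t ≤ 1 := by simp only [ht]; linarith
  set s : ℝ := -Real.log t with hs
  have hs0 : 0 ≤ s := by
    have := Real.log_nonpos ht0.le htle
    simp only [hs]; linarith
  have hexp : Real.exp s * t = Real.exp s * Real.exp (Real.log t) := by
    rw [Real.exp_log ht0]
  have htE : t * Real.exp s = 1 := by
    rw [hs, Real.exp_neg, Real.exp_log ht0]
    field_simp
  have hq : 1 + s + s ^ 2 / 2 ≤ Real.exp s := Real.quadratic_le_exp_of_nonneg hs0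
  have hE0 : 0 < Real.exp s := Real.exp_pos s
  have hkey : 2 * s * Real.exp s + 1 ≤ (Real.exp s) ^ 2 := by
    nlinarith [sq_nonneg (s ^ 2), sq_nonneg (Real.exp s - 1 - s - s ^ 2 / 2), hq, hs0]
  have h1 : t ^ 2 * (Real.exp s) ^ 2 = 1 := by
    have : (t * Real.exp s) ^ 2 = 1 := by rw [htE]; norm_num
    nlinarith [this]
  have h2 : t ^ 2 * Real.exp s = t := by
    have : t * (t * Real.exp s) = t * 1 := by rw [htE]
    nlinarith [this]
  have hht : h t = t * s := by simp only [h, hs]; ring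
  have hgoal : 2 * (t * s) ≤ 1 - t ^ 2 := by
    nlinarith [mul_le_mul_of_nonneg_left hkey (sq_nonneg t), h1, h2]
  have hx : x = 1 - t := by simp [ht]
  rw [hht, hx]; nlinarith [hgoal]

/-- Taylor lower bound for `h (1 - a)` on `[0, 1/2]`. -/
lemma hB3 {a : ℝ} (ha0 : 0 ≤ a) (ha : a ≤ 1 / 2) :
    a - a ^ 2 / 2 - a ^ 3 / 2 ≤ h (1 - a) := by
  have habs : |a| < 1 := by rw [abs_of_nonneg ha0]; linarith
  have H := Real.abs_log_sub_add_sum_range_le habs 5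
  rw [abs_of_nonneg ha0] at H
  have hsum : (∑ i ∈ Finset.range 5, a ^ (i + 1) / (i + 1))
      = a + a ^ 2 / 2 + a ^ 3 / 3 + a ^ 4 / 4 + a ^ 5 / 5 := by
    simp [Finset.sum_range_succ]
    norm_num
  rw [hsum] at H
  have hub := (abs_le.1 H).2
  have h1a : (0:ℝ) < 1 - a := by linarith
  -- -log(1-a) ≥ S - a^6/(1-a)
  have hlog : a + a ^ 2 / 2 + a ^ 3 / 3 + a ^ 4 / 4 + a ^ 5 / 5 - a ^ 6 / (1 - a)
      ≤ -Real.log (1 - a) := by linarith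
  have hmul := mul_le_mul_of_nonneg_left hlog h1a.le
  have hrem : (1 - a) * (a ^ 6 / (1 - a)) = a ^ 6 := by field_simp
  have : (1 - a) * (a + a ^ 2 / 2 + a ^ 3 / 3 + a ^ 4 / 4 + a ^ 5 / 5) - a ^ 6
      ≤ h (1 - a) := by
    simp only [h]
    nlinarith [hmul, hrem]
  have hhalf : (0:ℝ) ≤ 1 / 2 - a := by linarith
  nlinarith [this, mul_nonneg (pow_nonneg ha0 3) hhalf, mul_nonneg (pow_nonneg ha0 4) hhalf,
    mul_nonneg (pow_nonneg ha0 5) hhalf, pow_nonneg ha0 3, pow_nonneg ha0 4,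
    pow_nonneg ha0 5, pow_nonneg ha0 6]

lemma key_ineq (α ρ : ℝ) (hα0 : 0 < α) (hα : α < 1 / 2) (hρ : 0 ≤ ρ)
    (hρα : ρ * α ≤ 1) (hsum : 2 * α - ρ * α ^ 2 ≤ 1) :
    h (ρ * α ^ 2) + 2 * h (α - ρ * α ^ 2) + h (1 - 2 * α + ρ * α ^ 2)
      ≤ 2 * (h α + h (1 - α)) - Psi ρ * α ^ 2 + (2 * ρ + 1) * α ^ 3 := by
  have hα2 : h (α ^ 2) = 2 * α * h α := by
    rw [sq, h_mul]; ring
  have e1 : h (ρ * α ^ 2) = α ^ 2 * h ρ + 2 * ρ * α * h α := by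
    rw [h_mul, hα2]; ring
  have e2 : h (α - ρ * α ^ 2) = (1 - ρ * α) * h α + α * h (1 - ρ * α) := by
    have : α - ρ * α ^ 2 = α * (1 - ρ * α) := by ring
    rw [this, h_mul]
  have e3 : h (1 - 2 * α + ρ * α ^ 2) = h (1 - (2 * α - ρ * α ^ 2)) := by ring_nf
  have hβα : ρ * α ^ 2 ≤ α := by nlinarith [hρα, hα0]
  have b1 : h (1 - ρ * α) ≤ ρ * α - (ρ * α) ^ 2 / 2 :=
    hB1 (mul_nonneg hρ hα0.le) hρα
  have b2 : h (1 - (2 * α - ρ * α ^ 2)) ≤ (2 * α - ρ * α ^ 2) - (2 * α - ρ * α ^ 2) ^ 2 / 2 :=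
    hB1 (by nlinarith) hsum
  have b3 : α - α ^ 2 / 2 - α ^ 3 / 2 ≤ h (1 - α) := hB3 hα0.le hα.le
  have hps : Psi ρ * α ^ 2 = (1 - ρ) * α ^ 2 - α ^ 2 * h ρ := by
    simp only [Psi, h]; ring
  rw [e1, e2, e3, hps]
  have b1' : 2 * α * h (1 - ρ * α) ≤ 2 * α * (ρ * α - (ρ * α) ^ 2 / 2) :=
    mul_le_mul_of_nonneg_left b1 (by linarith)
  nlinarith [b1', b2, b3, mul_nonneg (mul_nonneg (mul_nonneg hρ hρ) hα0.le)
    (mul_nonneg (mul_nonneg hα0.le hα0.le) hα0.le),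
    mul_nonneg (sq_nonneg (ρ * α)) hα0.le]

theorem entropy_functional_upper_bound (α ρ : ℝ)
    (hα0 : 0 < α) (hα : α < 1 / 2) (hρ : 0 ≤ ρ)
    (hρα : ρ * α ≤ 1) (hsum : 2 * α - ρ * α ^ 2 ≤ 1)
    (d : ℕ) (hd : 1 ≤ d) :
    (d : ℝ) / 2 * (h (ρ * α ^ 2) + 2 * h (α - ρ * α ^ 2) + h (1 - 2 * α + ρ * α ^ 2))
        - ((d : ℝ) - 1) * (h α + h (1 - α))
      ≤ -((d : ℝ) / 2) * Psi ρ * α ^ 2 + α + h α + (2 * ρ + 1) * (d : ℝ) / 2 * α ^ 3 := by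
  have key := key_ineq α ρ hα0 hα hρ hρα hsum
  have hb : h (1 - α) ≤ α := by
    have := hB1 hα0.le (by linarith : α ≤ 1)
    nlinarith [sq_nonneg α]
  have hd1 : (1 : ℝ) ≤ (d : ℝ) := by exact_mod_cast hd
  have hd2 : (0 : ℝ) ≤ (d : ℝ) / 2 := by linarith
  have hmk := mul_le_mul_of_nonneg_left key hd2
  nlinarith [hmk, hb, hd1]
end
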